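/- Let g : ℝⁿ → ℝ be Lipschitz continuous and θ-increasing, i.e. g(x + s𝟙) ≥ g(x) + θs for all x and s ≥ 0, with θ > 0. Let ḡ(y) = g(R⁻¹y) where R is the linear change of variables yᵢ = xᵢ − xₙ for 1 ≤ i ≤ n−1 and yₙ = x₁+⋯+xₙ. Then there exists a Lipschitz continuous function h⁰ : ℝⁿ → ℝ such that ḡ(y₁,…,y_{n-1}, h⁰(y₁,…,y_{n-1},s)) = s for all y ∈ ℝ^{n-1} and s ∈ ℝ; moreover, where differentiable, √n/Lip(g) ≤ ∂h⁰/∂s ≤ n/θ. -/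

import Mathlib

open Filter Topology

lemma pinorm_le_sqrt {m : ℕ} (a : Fin m → ℝ) : ‖a‖ ≤ Real.sqrt (∑ i, (a i)^2) := by
  rw [pi_norm_le_iff_of_nonneg (Real.sqrt_nonneg _)]
  intro i
  rw [Real.norm_eq_abs, ← Real.sqrt_sq_eq_abs]
  exact Real.sqrt_le_sqrt (Finset.single_le_sum (f := fun j => (a j)^2)
    (fun j _ => sq_nonneg _) (Finset.mem_univ i))

lemma sqrt_le_pinorm {m : ℕ} (a : Fin m → ℝ) :
    Real.sqrt (∑ i, (a i)^2) ≤ Real.sqrt m * ‖a‖ := by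
  have h1 : ∑ i, (a i)^2 ≤ (m : ℝ) * ‖a‖^2 := by
    calc ∑ i, (a i)^2 ≤ ∑ _i : Fin m, ‖a‖^2 := by
          refine Finset.sum_le_sum fun i _ => ?_
          have h2 : |a i| ≤ ‖a‖ := by simpa using norm_le_pi_norm a i
          calc (a i)^2 = |a i|^2 := (sq_abs _).symm
            _ ≤ ‖a‖^2 := pow_le_pow_left₀ (abs_nonneg _) h2 2
      _ = (m : ℝ) * ‖a‖^2 := by
          simp [Finset.sum_const, Finset.card_univ]
  calc Real.sqrt (∑ i, (a i)^2) ≤ Real.sqrt ((m:ℝ) * ‖a‖^2) := Real.sqrt_le_sqrt h1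
    _ = Real.sqrt m * ‖a‖ := by
        rw [Real.sqrt_mul (Nat.cast_nonneg m), Real.sqrt_sq (norm_nonneg a)]



/-- The change of variables R: yᵢ = xᵢ − xₙ for i < n (0-indexed i < n), yₙ = x₁ + ⋯ + xₙ.
Here the n of the paper is n+1. -/
noncomputable def Rmap {n : ℕ} (x : Fin (n+1) → ℝ) : Fin (n+1) → ℝ :=
  fun j => if (j : ℕ) < n then x j - x (Fin.last n) else ∑ i, x i

/-- Proposition 5.6: for g Lipschitz and θ-increasing, with ḡ = g ∘ R⁻¹, there
is a Lipschitz function h⁰ with ḡ(y₁,…,y_{n-1}, h⁰(y₁,…,y_{n-1},s)) = s, and wherever the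
partial derivative ∂h⁰/∂s exists it lies in [√n/Lip(g), n/θ].  (Paper n = n+1 here; the
argument vector of h⁰ carries (y₁,…,y_{n-1}) in its first n coordinates and s in its last.) -/
theorem stmt13 {n : ℕ} (hn : 1 ≤ n) (g : (Fin (n+1) → ℝ) → ℝ)
    (L θ : ℝ) (hL : 0 < L) (hθ : 0 < θ)
    (hLip : ∀ x y : Fin (n+1) → ℝ, |g x - g y| ≤ L * Real.sqrt (∑ i, (x i - y i)^2))
    (hmono : ∀ (x : Fin (n+1) → ℝ) (s : ℝ), 0 ≤ s → g x + θ * s ≤ g (fun i => x i + s))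
    (Rinv : (Fin (n+1) → ℝ) → (Fin (n+1) → ℝ))
    (hRinv : ∀ x, Rinv (Rmap x) = x) (hRinv' : ∀ y, Rmap (Rinv y) = y) :
    ∃ (h0 : (Fin (n+1) → ℝ) → ℝ) (K : ℝ),
      (∀ w w' : Fin (n+1) → ℝ, |h0 w - h0 w'| ≤ K * Real.sqrt (∑ i, (w i - w' i)^2)) ∧
      (∀ w : Fin (n+1) → ℝ,
        g (Rinv (Function.update w (Fin.last n) (h0 w))) = w (Fin.last n)) ∧
      (∀ (w : Fin (n+1) → ℝ) (c : ℝ),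
        HasDerivAt (fun s => h0 (Function.update w (Fin.last n) s)) c (w (Fin.last n)) →
        Real.sqrt (n+1) / L ≤ c ∧ c ≤ (n+1) / θ) := by
  have hN : (0:ℝ) < (n:ℝ) + 1 := by positivity
  have hsq : (0:ℝ) < Real.sqrt ((n:ℝ)+1) := Real.sqrt_pos.mpr hN
  -- Rmap is additive and homogeneous, hence so is Rinv
  have hRadd : ∀ a b : Fin (n+1) → ℝ, Rmap (a + b) = Rmap a + Rmap b := by
    intro a b; funext j
    by_cases hj : (j:ℕ) < n <;>
      simp [Rmap, hj, Finset.sum_add_distrib] <;> ring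
  have hRsmul : ∀ (c : ℝ) (a : Fin (n+1) → ℝ), Rmap (c • a) = c • Rmap a := by
    intro c a; funext j
    by_cases hj : (j:ℕ) < n <;>
      simp [Rmap, hj, Finset.mul_sum, smul_eq_mul] <;> ring
  have hadd : ∀ u v, Rinv (u + v) = Rinv u + Rinv v := by
    intro u v
    have h : Rmap (Rinv u + Rinv v) = u + v := by rw [hRadd, hRinv', hRinv']
    rw [← h, hRinv]
  have hsmul : ∀ (c : ℝ) (u), Rinv (c • u) = c • Rinv u := by
    intro c u
    have h : Rmap (c • Rinv u) = c • u := by rw [hRsmul, hRinv']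
    rw [← h, hRinv]
  -- Rinv as a continuous linear map; C is its operator norm
  set T : (Fin (n+1) → ℝ) →ₗ[ℝ] (Fin (n+1) → ℝ) :=
    { toFun := Rinv, map_add' := hadd, map_smul' := hsmul } with hT
  set Tc : (Fin (n+1) → ℝ) →L[ℝ] (Fin (n+1) → ℝ) := LinearMap.toContinuousLinearMap T with hTc
  set C : ℝ := ‖Tc‖ with hC
  have hC0 : 0 ≤ C := norm_nonneg _
  have hTcapp : ∀ u, Tc u = Rinv u := fun u => by
    rw [hTc, LinearMap.coe_toContinuousLinearMap']; rfl
  have hRinvLip : ∀ u v, ‖Rinv u - Rinv v‖ ≤ C * ‖u - v‖ := by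
    intro u v
    have := Tc.le_opNorm (u - v)
    rwa [map_sub, hTcapp, hTcapp] at this
  -- Lipschitz constant for ḡ = g ∘ Rinv
  set M : ℝ := L * Real.sqrt ((n:ℝ)+1) * C with hM
  have hM0 : 0 ≤ M := by positivity
  have hgbar : ∀ u v, |g (Rinv u) - g (Rinv v)| ≤ M * Real.sqrt (∑ i, (u i - v i)^2) := by
    intro u v
    have h1 := hLip (Rinv u) (Rinv v)
    have h2 : Real.sqrt (∑ i, (Rinv u i - Rinv v i)^2)
        ≤ Real.sqrt ((n:ℝ)+1) * ‖Rinv u - Rinv v‖ := by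
      have := sqrt_le_pinorm (Rinv u - Rinv v)
      simpa [Nat.cast_add, Nat.cast_one] using this
    have h3 : ‖u - v‖ ≤ Real.sqrt (∑ i, (u i - v i)^2) := by
      have := pinorm_le_sqrt (u - v)
      simpa using this
    calc |g (Rinv u) - g (Rinv v)| ≤ L * Real.sqrt (∑ i, (Rinv u i - Rinv v i)^2) := h1
      _ ≤ L * (Real.sqrt ((n:ℝ)+1) * ‖Rinv u - Rinv v‖) :=
          mul_le_mul_of_nonneg_left h2 hL.le
      _ ≤ L * (Real.sqrt ((n:ℝ)+1) * (C * ‖u - v‖)) := by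
          have := hRinvLip u v
          gcongr
      _ = M * ‖u - v‖ := by rw [hM]; ring
      _ ≤ M * Real.sqrt (∑ i, (u i - v i)^2) := mul_le_mul_of_nonneg_left h3 hM0
  -- translation identity
  have key : ∀ (y : Fin (n+1) → ℝ) (s t : ℝ),
      Rinv (Function.update y (Fin.last n) (s + t))
        = fun i => Rinv (Function.update y (Fin.last n) s) i + t/((n:ℝ)+1) := by
    intro y s t
    set x := Rinv (Function.update y (Fin.last n) s) with hx
    have hxm : Rmap x = Function.update y (Fin.last n) s := hRinv' _
    have hmain : Rmap (fun i => x i + t/((n:ℝ)+1)) = Function.update y (Fin.last n) (s + t) := by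
      funext j
      by_cases hj : (j:ℕ) < n
      · have hjne : j ≠ Fin.last n := by
          intro h; rw [h] at hj; simp [Fin.last] at hj
        have hxj : x j - x (Fin.last n) = y j := by
          have hc := congrFun hxm j
          simpa [Rmap, hj, Function.update_of_ne hjne] using hc
        simp only [Rmap, hj, if_true, Function.update_of_ne hjne]
        linarith [hxj]
      · have hj' : j = Fin.last n := by
          apply Fin.ext
          have := j.isLt
          simp [Fin.last]
          omega
        subst hj'
        have hxs : ∑ i, x i = s := by
          have hc := congrFun hxm (Fin.last n)
          simpa [Rmap, Fin.last] using hc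
        simp only [Rmap, Fin.last, Function.update_self]
        rw [if_neg (by simp)]
        rw [Finset.sum_add_distrib, hxs, Finset.sum_const, Finset.card_univ]
        simp only [Fintype.card_fin, nsmul_eq_mul]
        push_cast
        field_simp
    calc Rinv (Function.update y (Fin.last n) (s + t))
        = Rinv (Rmap (fun i => x i + t/((n:ℝ)+1))) := by rw [hmain]
      _ = fun i => x i + t/((n:ℝ)+1) := hRinv _
  -- the function F
  set F : (Fin (n+1) → ℝ) → ℝ → ℝ :=
    fun y s => g (Rinv (Function.update y (Fin.last n) s)) with hF
  have hF_mono : ∀ y s t, 0 ≤ t → F y s + θ * (t/((n:ℝ)+1)) ≤ F y (s + t) := by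
    intro y s t ht
    have h := hmono (Rinv (Function.update y (Fin.last n) s)) (t/((n:ℝ)+1))
      (div_nonneg ht hN.le)
    have hk := key y s t
    simpa [hF, hk] using h
  have hF_lip : ∀ y s s', |F y s - F y s'| ≤ L / Real.sqrt ((n:ℝ)+1) * |s - s'| := by
    intro y s s'
    have hk := key y s' (s - s')
    have hss : s' + (s - s') = s := by ring
    rw [hss] at hk
    have h := hLip (Rinv (Function.update y (Fin.last n) s))
       (Rinv (Function.update y (Fin.last n) s'))
    have hsum : ∑ i : Fin (n+1), (Rinv (Function.update y (Fin.last n) s) i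
          - Rinv (Function.update y (Fin.last n) s') i)^2
        = (s - s')^2 / ((n:ℝ)+1) := by
      have hterm : ∀ i : Fin (n+1), (Rinv (Function.update y (Fin.last n) s) i
          - Rinv (Function.update y (Fin.last n) s') i)^2
          = ((s - s')/((n:ℝ)+1))^2 := fun i => by rw [congrFun hk i]; ring
      rw [Finset.sum_congr rfl fun i _ => hterm i, Finset.sum_const, Finset.card_univ]
      simp only [Fintype.card_fin, nsmul_eq_mul]
      push_cast
      field_simp
    rw [hsum] at h
    have hs2 : Real.sqrt ((s - s')^2 / ((n:ℝ)+1))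
        = |s - s'| / Real.sqrt ((n:ℝ)+1) := by
      rw [Real.sqrt_div (sq_nonneg _), Real.sqrt_sq_eq_abs]
    rw [hs2] at h
    calc |F y s - F y s'| ≤ L * (|s - s'| / Real.sqrt ((n:ℝ)+1)) := h
      _ = L / Real.sqrt ((n:ℝ)+1) * |s - s'| := by ring
  -- continuity and surjectivity of F y
  have hFcont : ∀ y, Continuous (F y) := by
    intro y
    have hlw : LipschitzWith (Real.toNNReal (L / Real.sqrt ((n:ℝ)+1))) (F y) := by
      apply LipschitzWith.of_dist_le_mul
      intro a b
      rw [Real.dist_eq, Real.dist_eq, Real.coe_toNNReal _ (by positivity)]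
      exact hF_lip y a b
    exact hlw.continuous
  have hFtop : ∀ y, Tendsto (F y) atTop atTop := by
    intro y
    apply tendsto_atTop_mono' atTop (f₁ := fun s => F y 0 + θ * (s/((n:ℝ)+1)))
    · filter_upwards [eventually_ge_atTop (0:ℝ)] with s hs
      have h := hF_mono y 0 s hs
      simpa using h
    · apply tendsto_atTop_add_const_left
      exact Tendsto.const_mul_atTop hθ (Tendsto.atTop_div_const hN tendsto_id)
  have hFbot : ∀ y, Tendsto (F y) atBot atBot := by
    intro y
    apply tendsto_atBot_mono' atBot (f₁ := fun s => F y 0 + θ * (s/((n:ℝ)+1)))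
    · filter_upwards [eventually_le_atBot (0:ℝ)] with s hs
      have h := hF_mono y s (-s) (by linarith)
      simp only [add_neg_cancel] at h
      have : θ * (-s/((n:ℝ)+1)) = - (θ * (s/((n:ℝ)+1))) := by ring
      rw [this] at h
      linarith
    · apply tendsto_atBot_add_const_left
      exact Tendsto.const_mul_atBot hθ (Tendsto.atBot_div_const hN tendsto_id)
  have hsurj : ∀ y : Fin (n+1) → ℝ, ∃ s, F y s = y (Fin.last n) :=
    fun y => ((hFcont y).surjective (hFtop y) (hFbot y)) _
  set h0 : (Fin (n+1) → ℝ) → ℝ := fun w => Classical.choose (hsurj w) with hh0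
  have hh0spec : ∀ w, F w (h0 w) = w (Fin.last n) := fun w => Classical.choose_spec (hsurj w)
  refine ⟨h0, ((n:ℝ)+1) * (1 + M) / θ, ?_, ?_, ?_⟩
  · -- Lipschitz bound for h0
    have hone : ∀ w w', h0 w - h0 w'
        ≤ ((n:ℝ)+1) * (1 + M) / θ * Real.sqrt (∑ i, (w i - w' i)^2) := by
      intro w w'
      set S := Real.sqrt (∑ i, (w i - w' i)^2) with hS
      have hS0 : 0 ≤ S := Real.sqrt_nonneg _
      by_cases hc : h0 w' ≤ h0 w
      · have ht : 0 ≤ h0 w - h0 w' := by linarith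
        have h1 := hF_mono w' (h0 w') (h0 w - h0 w') ht
        rw [hh0spec w'] at h1
        rw [show h0 w' + (h0 w - h0 w') = h0 w by ring] at h1
        have h3 : |F w' (h0 w) - F w (h0 w)| ≤ M * S := by
          have hg := hgbar (Function.update w' (Fin.last n) (h0 w))
            (Function.update w (Fin.last n) (h0 w))
          refine le_trans hg ?_
          refine mul_le_mul_of_nonneg_left ?_ hM0
          apply Real.sqrt_le_sqrt
          refine Finset.sum_le_sum fun i _ => ?_
          by_cases hi : i = Fin.last n
          · subst hi
            simp only [Function.update_self, sub_self]
            nlinarith [sq_nonneg (w (Fin.last n) - w' (Fin.last n))]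
          · simp only [Function.update_of_ne hi]
            exact le_of_eq (by ring)
        have h4 : |w (Fin.last n) - w' (Fin.last n)| ≤ S := by
          rw [← Real.sqrt_sq_eq_abs]
          apply Real.sqrt_le_sqrt
          exact Finset.single_le_sum (f := fun i => (w i - w' i)^2)
            (fun i _ => sq_nonneg _) (Finset.mem_univ _)
        have h5 : F w (h0 w) = w (Fin.last n) := hh0spec w
        have ha := abs_le.mp h3
        have hb := abs_le.mp h4
        have h6 : θ * ((h0 w - h0 w')/((n:ℝ)+1)) ≤ (1 + M) * S := by
          have := ha.1
          have := hb.2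
          linarith
        rw [show θ * ((h0 w - h0 w')/((n:ℝ)+1)) = θ * (h0 w - h0 w')/((n:ℝ)+1) by ring] at h6
        have h7 := (div_le_iff₀ hN).mp h6
        rw [div_mul_eq_mul_div, le_div_iff₀ hθ]
        nlinarith
      · push_neg at hc
        have hle : h0 w - h0 w' ≤ 0 := by linarith
        refine le_trans hle ?_
        positivity
    intro w w'
    rw [abs_sub_le_iff]
    constructor
    · exact hone w w'
    · have hsym : ∑ i, (w' i - w i)^2 = ∑ i, (w i - w' i)^2 :=
        Finset.sum_congr rfl fun i _ => by ring
      have := hone w' w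
      rwa [hsym] at this
  · -- the defining equation
    intro w
    exact hh0spec w
  · -- derivative bounds
    intro w c hder
    have hφ : ∀ s, F w (h0 (Function.update w (Fin.last n) s)) = s := by
      intro s
      have h := hh0spec (Function.update w (Fin.last n) s)
      rw [Function.update_self] at h
      rw [hF] at h ⊢
      simpa [Function.update_idem] using h
    set φ : ℝ → ℝ := fun s => h0 (Function.update w (Fin.last n) s) with hφdef
    set s₀ := w (Fin.last n) with hs₀
    have hΔ : ∀ t : ℝ, 0 < t →
        Real.sqrt ((n:ℝ)+1)/L * t ≤ φ (s₀ + t) - φ s₀ ∧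
        φ (s₀ + t) - φ s₀ ≤ ((n:ℝ)+1)/θ * t := by
      intro t ht
      have h1 : F w (φ (s₀ + t)) = s₀ + t := hφ _
      have h2 : F w (φ s₀) = s₀ := hφ _
      have hge : φ s₀ ≤ φ (s₀ + t) := by
        by_contra hlt
        push_neg at hlt
        have hm := hF_mono w (φ (s₀ + t)) (φ s₀ - φ (s₀ + t)) (by linarith)
        rw [show φ (s₀ + t) + (φ s₀ - φ (s₀ + t)) = φ s₀ by ring, h1, h2] at hm
        have hpos : 0 ≤ θ * ((φ s₀ - φ (s₀ + t))/((n:ℝ)+1)) := by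
          have : 0 ≤ (φ s₀ - φ (s₀ + t))/((n:ℝ)+1) := by
            apply div_nonneg _ hN.le; linarith
          positivity
        linarith
      constructor
      · have h3 := hF_lip w (φ (s₀ + t)) (φ s₀)
        rw [h1, h2, show s₀ + t - s₀ = t by ring, abs_of_pos ht,
          abs_of_nonneg (by linarith : (0:ℝ) ≤ φ (s₀ + t) - φ s₀)] at h3
        rw [div_mul_eq_mul_div] at h3
        have h3' := (le_div_iff₀ hsq).mp h3
        rw [div_mul_eq_mul_div, div_le_iff₀ hL]
        linarith
      · have h6 := hF_mono w (φ s₀) (φ (s₀ + t) - φ s₀) (by linarith)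
        rw [show φ s₀ + (φ (s₀ + t) - φ s₀) = φ (s₀ + t) by ring, h1, h2] at h6
        have h7 : θ * ((φ (s₀ + t) - φ s₀)/((n:ℝ)+1)) ≤ t := by linarith
        rw [show θ * ((φ (s₀ + t) - φ s₀)/((n:ℝ)+1))
          = θ * (φ (s₀ + t) - φ s₀)/((n:ℝ)+1) by ring] at h7
        have h8 := (div_le_iff₀ hN).mp h7
        rw [div_mul_eq_mul_div, le_div_iff₀ hθ]
        linarith
    rw [hasDerivAt_iff_tendsto_slope] at hder
    have hmem : 𝓝[>] s₀ ≤ 𝓝[≠] s₀ := nhdsWithin_mono _ fun x hx => ne_of_gt hx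
    have hder' := hder.mono_left hmem
    have hcast : Real.sqrt ((n:ℕ)+1 : ℝ) = Real.sqrt ((n:ℝ)+1) := by push_cast; ring_nf
    constructor
    · refine ge_of_tendsto hder' ?_
      filter_upwards [self_mem_nhdsWithin] with y hy
      have hty : 0 < y - s₀ := sub_pos.mpr hy
      have h := (hΔ (y - s₀) hty).1
      rw [show s₀ + (y - s₀) = y by ring] at h
      rw [slope_def_field, le_div_iff₀ hty]
      calc Real.sqrt ((n:ℝ)+1) / L * (y - s₀) ≤ φ y - φ s₀ := h
        _ = _ := rfl
    · refine le_of_tendsto hder' ?_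
      filter_upwards [self_mem_nhdsWithin] with y hy
      have hty : 0 < y - s₀ := sub_pos.mpr hy
      have h := (hΔ (y - s₀) hty).2
      rw [show s₀ + (y - s₀) = y by ring] at h
      rw [slope_def_field, div_le_iff₀ hty]
      calc φ y - φ s₀ ≤ ((n:ℝ)+1)/θ * (y - s₀) := h
        _ = _ := by push_cast; ring
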